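/- A set-valued function C : [0,1] → 2^Θ can be realized as an e-CI (i.e., there exists a family of e-values E(θ) with C(α) = {θ : E(θ) < 1/α} for all α ∈ [0,1)) if and only if C is nonincreasing (α ≤ β implies C(β) ⊆ C(α)) and continuous from above (C(α) = ⋃_{β > α} C(β) for all α ∈ [0,1)). -/
import Mathlib


open MeasureTheory ENNReal
open scoped ENNReal

/-- A set-valued function `C : [0,1] → 2^Θ` is realizable as an e-CI (there is a family
of e-values `E θ` — nonnegative with expectation at most 1 under each parameter — and a
possible outcome `ω` with `C α = {θ : E θ ω < 1/α}` for all `α ∈ [0,1)`) if and only if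
`C` is nonincreasing and continuous from above. -/
theorem eCI_realizable_iff {Θ : Type*} (C : ℝ → Set Θ) :
    (∃ (Ω : Type) (_ : MeasurableSpace Ω) (P : Θ → Measure Ω)
        (_ : ∀ θ, IsProbabilityMeasure (P θ)) (E : Θ → Ω → ℝ≥0∞),
        (∀ θ, ∫⁻ ω, E θ ω ∂(P θ) ≤ 1) ∧
        ∃ ω : Ω, ∀ α : ℝ, 0 ≤ α → α < 1 →
          C α = {θ | E θ ω < (ENNReal.ofReal α)⁻¹})
    ↔ ((∀ a b : ℝ, 0 ≤ a → a ≤ b → b < 1 → C b ⊆ C a) ∧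
        (∀ a : ℝ, 0 ≤ a → a < 1 → C a = ⋃ b ∈ Set.Ioo a 1, C b)) := by
  constructor
  · rintro ⟨Ω, _, P, _, E, _, ω, hω⟩
    constructor
    · intro a b ha hab hb θ hθ
      rw [hω b (ha.trans hab) hb] at hθ
      rw [hω a ha (lt_of_le_of_lt hab hb)]
      exact lt_of_lt_of_le hθ (ENNReal.inv_le_inv.2 (ENNReal.ofReal_le_ofReal hab))
    · intro a ha ha1
      ext θ
      simp only [Set.mem_iUnion, Set.mem_Ioo, exists_prop]
      constructor
      · intro hθ
        rw [hω a ha ha1] at hθ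
        set x := E θ ω with hx
        have hxa : ENNReal.ofReal a < x⁻¹ := by
          rw [← ENNReal.inv_lt_inv, inv_inv]; exact hθ
        by_cases hxinf : x⁻¹ = ⊤
        · refine ⟨(a + 1) / 2, ⟨by linarith, by linarith⟩, ?_⟩
          rw [hω ((a+1)/2) (by linarith) (by linarith)]
          simp only [Set.mem_setOf_eq]
          rw [← ENNReal.inv_lt_inv, inv_inv] at *
          rw [hxinf]
          exact (ENNReal.ofReal_lt_top).trans_le le_top
        · have hr : a < (x⁻¹).toReal := by
            rw [← ENNReal.ofReal_lt_iff_lt_toReal ha hxinf]; exact hxa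
          refine ⟨min ((a + 1) / 2) ((a + (x⁻¹).toReal) / 2),
            ⟨lt_min (by linarith) (by linarith), (min_le_left _ _).trans_lt (by linarith)⟩, ?_⟩
          rw [hω _ (le_of_lt (lt_of_le_of_lt ha (lt_min (by linarith) (by linarith))))
            ((min_le_left _ _).trans_lt (by linarith))]
          simp only [Set.mem_setOf_eq]
          rw [← ENNReal.inv_lt_inv, inv_inv]
          calc ENNReal.ofReal (min ((a + 1) / 2) ((a + (x⁻¹).toReal) / 2))
              ≤ ENNReal.ofReal ((a + (x⁻¹).toReal) / 2) :=
                ENNReal.ofReal_le_ofReal (min_le_right _ _)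
            _ < ENNReal.ofReal ((x⁻¹).toReal) :=
                ENNReal.ofReal_lt_ofReal_iff (by linarith) |>.2 (by linarith)
            _ = x⁻¹ := ENNReal.ofReal_toReal hxinf
      · rintro ⟨b, ⟨hab, hb1⟩, hθ⟩
        rw [hω b (ha.trans hab.le) hb1] at hθ
        rw [hω a ha ha1]
        exact lt_of_lt_of_le hθ (ENNReal.inv_le_inv.2 (ENNReal.ofReal_le_ofReal hab.le))
  · rintro ⟨hmono, hcont⟩
    classical
    -- the "significance" threshold
    set s : Θ → ℝ := fun θ => sSup {α | α ∈ Set.Ico (0:ℝ) 1 ∧ θ ∈ C α} with hs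
    have hkey : ∀ θ, ∀ α : ℝ, 0 ≤ α → α < 1 → (θ ∈ C α ↔ α < s θ) := by
      intro θ α ha ha1
      constructor
      · intro hθ
        have := hcont α ha ha1
        rw [this] at hθ
        simp only [Set.mem_iUnion, Set.mem_Ioo, exists_prop] at hθ
        obtain ⟨b, ⟨hab, hb1⟩, hbθ⟩ := hθ
        have hbdd : BddAbove {α | α ∈ Set.Ico (0:ℝ) 1 ∧ θ ∈ C α} :=
          ⟨1, fun x hx => hx.1.2.le⟩
        have : b ≤ s θ := le_csSup hbdd ⟨⟨ha.trans hab.le, hb1⟩, hbθ⟩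
        linarith
      · intro hlt
        have hne : {α | α ∈ Set.Ico (0:ℝ) 1 ∧ θ ∈ C α}.Nonempty := by
          by_contra h
          rw [Set.not_nonempty_iff_eq_empty] at h
          rw [hs] at hlt
          simp only [h, Real.sSup_empty] at hlt
          linarith
        obtain ⟨b, hb, hab⟩ := exists_lt_of_lt_csSup hne hlt
        exact hmono α b ha hab.le hb.1.2 hb.2
    have hs_nonneg : ∀ θ, 0 ≤ s θ := by
      intro θ
      by_cases hne : {α | α ∈ Set.Ico (0:ℝ) 1 ∧ θ ∈ C α}.Nonempty
      · obtain ⟨b, hb⟩ := hne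
        exact hb.1.1.trans (le_csSup ⟨1, fun x hx => hx.1.2.le⟩ hb)
      · rw [Set.not_nonempty_iff_eq_empty] at hne
        show (0:ℝ) ≤ sSup {α | α ∈ Set.Ico (0:ℝ) 1 ∧ θ ∈ C α}
        rw [hne, Real.sSup_empty]
    refine ⟨ℝ, inferInstance, fun _ => volume.restrict (Set.Ioo 0 1),
      fun _ => ⟨by simp⟩,
      fun θ => Set.indicator {(0:ℝ)} (fun _ => (ENNReal.ofReal (s θ))⁻¹), ?_, 0, ?_⟩
    · intro θ
      simp only []
      rw [lintegral_indicator (measurableSet_singleton 0)]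
      simp [Measure.restrict_apply]
    · intro α ha ha1
      ext θ
      simp only [Set.mem_setOf_eq]
      rw [Set.indicator_of_mem (Set.mem_singleton (0:ℝ))]
      rw [hkey θ α ha ha1, ENNReal.inv_lt_inv]
      rcases lt_or_ge 0 (s θ) with hpos | hnonpos
      · exact (ENNReal.ofReal_lt_ofReal_iff hpos).symm
      · have : s θ = 0 := le_antisymm hnonpos (hs_nonneg θ)
        rw [this, ENNReal.ofReal_zero]
        simp [not_lt.2 ha]
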